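/- arXiv:2009.12074 — 8 statements merged into one kernel-verified Lean document; each statement's English description precedes it below -/
import Mathlib

section
/- Let X be a completely regular Hausdorff space and T : C_b(X) → C_b(X) a unital algebra homomorphism that is continuous with respect to the mixed (strict) topology. Then there exists a unique continuous map ψ : X → X such that T f = f ∘ ψ for all f ∈ C_b(X). -/
open BoundedContinuousFunction

/-- A bounded function vanishing at infinity (the functions inducing the seminorms
`p_g(f) = ‖f·g‖_∞` of the mixed (strict) topology). -/
def VanishesAtInfinity {X : Type*} [TopologicalSpace X] (g : X → ℂ) : Prop :=
  (∃ C : ℝ, ∀ x, ‖g x‖ ≤ C) ∧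
    ∀ ε > (0 : ℝ), ∃ K : Set X, IsCompact K ∧ ∀ x ∉ K, ‖g x‖ ≤ ε

/-- Auxiliary: a continuous `unitInterval`-valued function gives a bounded continuous
complex function. -/
lemma exists_bcf_of_unitInterval {X : Type*} [TopologicalSpace X]
    (f : X → unitInterval) (hf : Continuous f) :
    ∃ F : X →ᵇ ℂ, ∀ y, F y = ((f y : ℝ) : ℂ) := by
  refine ⟨BoundedContinuousFunction.ofNormedAddCommGroup (fun y => ((f y : ℝ) : ℂ))
      (Complex.continuous_ofReal.comp (continuous_subtype_val.comp hf)) 1 (fun y => ?_),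
    fun y => rfl⟩
  rw [Complex.norm_real, Real.norm_eq_abs, abs_of_nonneg (f y).2.1]
  exact (f y).2.2

/-- Every unital algebra homomorphism `T : C_b(X) → C_b(X)` that is continuous with
respect to the mixed (strict) topology (expressed through domination of the defining
seminorms `p_g`) is the Koopman operator of a unique continuous map `ψ : X → X`. -/
theorem mixed_continuous_unital_algebra_hom_is_koopman
    {X : Type*} [TopologicalSpace X] [CompletelyRegularSpace X] [T2Space X]
    (T : (X →ᵇ ℂ) →ₗ[ℂ] (X →ᵇ ℂ))
    (hmul : ∀ f g : X →ᵇ ℂ, T (f * g) = T f * T g)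
    (hone : T 1 = 1)
    (hcont : ∀ g : X → ℂ, VanishesAtInfinity g →
      ∃ g' : X → ℂ, VanishesAtInfinity g' ∧ ∃ C > (0 : ℝ),
        ∀ f : X →ᵇ ℂ, (⨆ x, ‖(T f) x * g x‖) ≤ C * ⨆ x, ‖f x * g' x‖) :
    ∃! ψ : C(X, X), ∀ f : X →ᵇ ℂ, T f = f.compContinuous ψ := by
  classical
  -- separation of points by bounded continuous functions
  have sep : ∀ z z' : X, (∀ f : X →ᵇ ℂ, f z = f z') → z = z' := by
    intro z z' h
    by_contra hne
    obtain ⟨f, hf, hf0, hf1⟩ := CompletelyRegularSpace.completely_regular z {z'}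
      isClosed_singleton (by simpa using hne)
    obtain ⟨F, hF⟩ := exists_bcf_of_unitInterval f hf
    have h0 : F z = 0 := by rw [hF, hf0]; simp
    have h1 : F z' = 1 := by
      rw [hF, hf1 (Set.mem_singleton z')]; simp
    have : (0 : ℂ) = 1 := by rw [← h0, h F, h1]
    exact zero_ne_one this
  -- the key pointwise claim
  have key : ∀ x : X, ∃ z : X, ∀ f : X →ᵇ ℂ, T f x = f z := by
    intro x
    haveI : Nonempty X := ⟨x⟩
    set g : X → ℂ := fun y => if y = x then 1 else 0 with hgdef
    have hgvan : VanishesAtInfinity g := by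
      constructor
      · exact ⟨1, fun y => by by_cases h : y = x <;> simp [hgdef, h]⟩
      · intro ε hε
        exact ⟨{x}, isCompact_singleton, fun y hy => by
          simp [hgdef, (by simpa using hy : y ≠ x), le_of_lt hε]⟩
    obtain ⟨g', ⟨⟨B, hB⟩, hvan⟩, C, hC, hbound⟩ := hcont g hgvan
    -- basic estimate
    have hTfx : ∀ f : X →ᵇ ℂ, ‖T f x‖ ≤ C * ⨆ y, ‖f y * g' y‖ := by
      intro f
      have h1 : ‖T f x‖ = ‖T f x * g x‖ := by simp [hgdef]
      have hbdd : BddAbove (Set.range fun y => ‖T f y * g y‖) := by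
        refine ⟨‖T f‖, ?_⟩
        rintro r ⟨y, rfl⟩
        calc ‖T f y * g y‖ ≤ ‖T f y‖ * ‖g y‖ := norm_mul_le _ _
          _ ≤ ‖T f‖ * 1 := by
              refine mul_le_mul ((T f).norm_coe_le_norm y) ?_ (norm_nonneg _) (norm_nonneg _)
              by_cases h : y = x <;> simp [hgdef, h]
          _ = ‖T f‖ := mul_one _
      calc ‖T f x‖ = ‖T f x * g x‖ := h1
        _ ≤ ⨆ y, ‖T f y * g y‖ := le_ciSup hbdd x
        _ ≤ C * ⨆ y, ‖f y * g' y‖ := hbound f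
    -- estimate for functions vanishing on a set outside which g' is small
    have est : ∀ (ε : ℝ), 0 < ε → ∀ (K : Set X), (∀ y ∉ K, ‖g' y‖ ≤ ε) →
        ∀ f : X →ᵇ ℂ, (∀ y ∈ K, f y = 0) → ‖f‖ ≤ 1 → ‖T f x‖ ≤ C * ε := by
      intro ε hε K hK f hfK hfnorm
      refine (hTfx f).trans (mul_le_mul_of_nonneg_left ?_ (le_of_lt hC))
      refine ciSup_le fun y => ?_
      by_cases hy : y ∈ K
      · rw [hfK y hy]; simpa using le_of_lt hε
      · calc ‖f y * g' y‖ ≤ ‖f y‖ * ‖g' y‖ := norm_mul_le _ _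
          _ ≤ 1 * ε := mul_le_mul ((f.norm_coe_le_norm y).trans hfnorm) (hK y hy)
              (norm_nonneg _) zero_le_one
          _ = ε := one_mul _
    set ε : ℝ := (2 * C)⁻¹ with hεdef
    have hεpos : 0 < ε := by positivity
    have hCε : C * ε = 1 / 2 := by
      field_simp [hεdef]
      rw [hεdef]; field_simp [hC.ne']
    obtain ⟨K, hKcomp, hKout⟩ := hvan ε hεpos
    by_contra hno
    push_neg at hno
    -- hno : ∀ z, ∃ f, T f x ≠ f z ... need to massage: first reduce to kernel form
    have hno' : ∀ z : X, ∃ f : X →ᵇ ℂ, T f x = 0 ∧ f z ≠ 0 := by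
      intro z
      obtain ⟨f, hf⟩ := hno z
      refine ⟨f - T f x • 1, ?_, ?_⟩
      · simp [map_sub, map_smul, hone]
      · intro hzero
        apply hf
        have hz' : f z - T f x = 0 := by
          simpa [BoundedContinuousFunction.sub_apply,
            BoundedContinuousFunction.smul_apply, smul_eq_mul] using hzero
        exact (sub_eq_zero.mp hz').symm
    choose F hF0 hFne using hno'
    -- derive contradiction; first handle K = ∅
    rcases K.eq_empty_or_nonempty with hKe | ⟨k0, hk0⟩
    · have h1 := est ε hεpos K hKout 1 (fun y hy => by rw [hKe] at hy; exact absurd hy (Set.notMem_empty y))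
        (by refine (norm_le zero_le_one).mpr fun y => by simp)
      rw [hone, hCε] at h1
      simp at h1
      norm_num at h1
    · -- finite subcover
      have hcover : K ⊆ ⋃ z ∈ K, {y | 0 < ‖F z y‖} := by
        intro y hy
        exact Set.mem_biUnion hy (by simpa [norm_pos_iff] using hFne y)
      obtain ⟨s, hsK, hsfin, hscover⟩ := hKcomp.elim_finite_subcover_image
        (fun z _ => isOpen_lt continuous_const ((F z).continuous.norm)) hcover
      set t := hsfin.toFinset with htdef
      have htmem : ∀ z, z ∈ t ↔ z ∈ s := fun z => hsfin.mem_toFinset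
      set h : X →ᵇ ℂ := ∑ z ∈ t, star (F z) * F z with hhdef
      set H : X → ℝ := fun y => ∑ z ∈ t, ‖F z y‖ ^ 2 with hHdef
      have hhy : ∀ y, h y = (H y : ℂ) := by
        intro y
        rw [hhdef, hHdef]
        push_cast
        rw [BoundedContinuousFunction.coe_sum]
        simp only [Finset.sum_apply]
        refine Finset.sum_congr rfl fun z _ => ?_
        rw [BoundedContinuousFunction.mul_apply, BoundedContinuousFunction.star_apply]
        exact_mod_cast RCLike.conj_mul (F z y)
      have hHnonneg : ∀ y, 0 ≤ H y := fun y =>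
        Finset.sum_nonneg fun z _ => sq_nonneg _
      have hHcont : Continuous H := by
        refine continuous_finset_sum _ fun z _ => ?_
        exact ((F z).continuous.norm).pow 2
      have hHpos : ∀ y ∈ K, 0 < H y := by
        intro y hy
        obtain ⟨z, hzs, hzy⟩ := Set.mem_iUnion₂.mp (hscover hy)
        refine Finset.sum_pos' (fun w _ => sq_nonneg _) ⟨z, (htmem z).mpr hzs, ?_⟩
        have : 0 < ‖F z y‖ := hzy
        positivity
      have hTh : T h x = 0 := by
        rw [hhdef, map_sum, BoundedContinuousFunction.coe_sum]
        simp only [Finset.sum_apply]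
        refine Finset.sum_eq_zero fun z _ => ?_
        rw [hmul, BoundedContinuousFunction.mul_apply, hF0 z, mul_zero]
      obtain ⟨k, hkK, hkmin⟩ := hKcomp.exists_isMinOn ⟨k0, hk0⟩ hHcont.continuousOn
      set δ : ℝ := H k with hδdef
      have hδpos : 0 < δ := hHpos k hkK
      have hδle : ∀ y ∈ K, δ ≤ H y := fun y hy => hkmin hy
      -- the function W = (max(H, δ))⁻¹
      have hmaxpos : ∀ y, 0 < max (H y) δ := fun y => lt_of_lt_of_le hδpos (le_max_right _ _)
      set W : X →ᵇ ℂ := BoundedContinuousFunction.ofNormedAddCommGroup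
        (fun y => (((max (H y) δ)⁻¹ : ℝ) : ℂ))
        (Complex.continuous_ofReal.comp ((hHcont.max continuous_const).inv₀
          fun y => ne_of_gt (hmaxpos y))) δ⁻¹ (fun y => by
            rw [Complex.norm_real, Real.norm_eq_abs, abs_of_nonneg (le_of_lt (inv_pos.mpr (hmaxpos y)))]
            exact inv_anti₀ hδpos (le_max_right _ _)) with hWdef
      have hWy : ∀ y, W y = (((max (H y) δ)⁻¹ : ℝ) : ℂ) := fun y => rfl
      set Fb : X →ᵇ ℂ := 1 - h * W with hFbdef
      have hFbK : ∀ y ∈ K, Fb y = 0 := by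
        intro y hy
        have hmax : max (H y) δ = H y := max_eq_left (hδle y hy)
        rw [hFbdef]
        simp only [BoundedContinuousFunction.sub_apply, BoundedContinuousFunction.mul_apply,
          BoundedContinuousFunction.coe_one, Pi.one_apply]
        rw [hhy y, hWy y, hmax, ← Complex.ofReal_mul,
          mul_inv_cancel₀ (ne_of_gt (hHpos y hy))]
        simp
      have hFbnorm : ‖Fb‖ ≤ 1 := by
        refine (norm_le zero_le_one).mpr fun y => ?_
        rw [hFbdef]
        simp only [BoundedContinuousFunction.sub_apply, BoundedContinuousFunction.mul_apply,
          BoundedContinuousFunction.coe_one, Pi.one_apply]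
        rw [hhy y, hWy y, ← Complex.ofReal_mul, ← Complex.ofReal_one, ← Complex.ofReal_sub,
          Complex.norm_real, Real.norm_eq_abs]
        have h1 : H y * (max (H y) δ)⁻¹ ≤ 1 := by
          rw [← div_eq_mul_inv]
          exact div_le_one_of_le₀ (le_max_left _ _) (le_of_lt (hmaxpos y))
        have h2 : 0 ≤ H y * (max (H y) δ)⁻¹ :=
          mul_nonneg (hHnonneg y) (le_of_lt (inv_pos.mpr (hmaxpos y)))
        rw [abs_of_nonneg (by linarith)]
        linarith
      have hTFb : T Fb x = 1 := by
        rw [hFbdef, map_sub, hone, BoundedContinuousFunction.sub_apply,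
          BoundedContinuousFunction.coe_one, Pi.one_apply, hmul, BoundedContinuousFunction.mul_apply,
          hTh, zero_mul, sub_zero]
      have := est ε hεpos K hKout Fb hFbK hFbnorm
      rw [hTFb, hCε] at this
      simp at this
      norm_num at this
  -- construct ψ
  choose ψ0 hψ0 using key
  have hcontψ : Continuous ψ0 := by
    rw [continuous_iff_continuousAt]
    intro x
    rw [ContinuousAt, tendsto_nhds]
    intro V hVopen hxV
    obtain ⟨f, hf, hf0, hf1⟩ := CompletelyRegularSpace.completely_regular (ψ0 x) Vᶜ
      (isClosed_compl_iff.mpr hVopen) (by simpa using hxV)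
    obtain ⟨F, hF⟩ := exists_bcf_of_unitInterval f hf
    refine mem_nhds_iff.mpr ⟨{y | ‖T F y‖ < 1}, ?_, ?_, ?_⟩
    · intro y hy
      have hy' : ‖F (ψ0 y)‖ < 1 := by rw [← hψ0 y F]; exact hy
      by_contra hnot
      have : ψ0 y ∈ Vᶜ := hnot
      rw [hF, hf1 this] at hy'
      simp at hy'
    · exact isOpen_lt ((T F).continuous.norm) continuous_const
    · show ‖T F x‖ < 1
      rw [hψ0 x F, hF, hf0]
      simp
  refine ⟨⟨ψ0, hcontψ⟩, fun f => ?_, fun ψ' hψ' => ?_⟩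
  · ext y
    exact hψ0 y f
  · ext x
    refine sep (ψ' x) (ψ0 x) fun f => ?_
    have h1 : T f x = f (ψ' x) := by rw [hψ' f]; rfl
    rw [← h1, hψ0 x f]
end

section
/- For fixed complex numbers w and z, the function h : [0, ∞) → ℝ given by h(t) = |w + t z| is right-differentiable at 0 with right derivative Re(hsign(conj(w)) z), where hsign(w)(z) := (w/|w|)·z if w ≠ 0 and hsign(0)(z) := |z|. -/
open Filter

/-- `hsign w z = (sign w) · z` for `w ≠ 0` and `|z|` for `w = 0`. -/
noncomputable def hsign (w z : ℂ) : ℂ :=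
  if w = 0 then (‖z‖ : ℂ) else (w / (‖w‖ : ℂ)) * z

/-- For fixed `w, z ∈ ℂ`, the map `t ↦ |w + t z|` is right-differentiable at `0` with
right derivative `Re (hsign (conj w) z)`. -/
theorem abs_right_deriv (w z : ℂ) :
    Tendsto (fun t : ℝ => (‖w + t * z‖ - ‖w‖) / t)
      (nhdsWithin 0 (Set.Ioi 0)) (nhds ((hsign (starRingEnd ℂ w) z).re)) := by
  by_cases hw : w = 0
  · subst hw
    have h0 : (hsign (starRingEnd ℂ 0) z).re = ‖z‖ := by simp [hsign]
    rw [h0]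
    apply Tendsto.congr' _ tendsto_const_nhds
    filter_upwards [self_mem_nhdsWithin] with t ht
    have ht' : (0:ℝ) < t := ht
    rw [zero_add, norm_mul, norm_zero, sub_zero, Complex.norm_real, Real.norm_eq_abs, abs_of_pos ht',
      mul_comm, mul_div_assoc, div_self ht'.ne', mul_one]
  · have hg : HasDerivAt (fun t : ℝ => Complex.normSq (w + t * z))
        (2 * ((starRingEnd ℂ w) * z).re) 0 := by
      have heq : (fun t : ℝ => Complex.normSq (w + t * z)) =
          fun t : ℝ => Complex.normSq w + 2 * ((starRingEnd ℂ w) * z).re * t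
            + Complex.normSq z * t ^ 2 := by
        funext t
        simp only [Complex.normSq_apply, Complex.add_re, Complex.add_im, Complex.mul_re,
          Complex.mul_im, Complex.ofReal_re, Complex.ofReal_im, Complex.conj_re,
          Complex.conj_im]
        ring
      rw [heq]
      convert (((hasDerivAt_id (0:ℝ)).const_mul (2 * ((starRingEnd ℂ w) * z).re)).const_add
        (Complex.normSq w)).add
        (((hasDerivAt_pow 2 (0:ℝ)).const_mul (Complex.normSq z))) using 1
      · rfl
      · rfl
      · funext t; simp
      · simp
    have hne : Complex.normSq (w + ((0:ℝ) : ℂ) * z) ≠ 0 := by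
      simpa using (Complex.normSq_pos.mpr hw).ne'
    have habs : (fun t : ℝ => ‖w + t * z‖) =
        fun t : ℝ => Real.sqrt (Complex.normSq (w + t * z)) := by
      funext t; exact Complex.norm_def _
    have hderiv : HasDerivAt (fun t : ℝ => ‖w + t * z‖)
        ((2 * ((starRingEnd ℂ w) * z).re)
          / (2 * Real.sqrt (Complex.normSq w))) 0 := by
      rw [habs]; simpa using hg.sqrt hne
    have hval : (2 * ((starRingEnd ℂ w) * z).re)
        / (2 * Real.sqrt (Complex.normSq w))
        = (hsign (starRingEnd ℂ w) z).re := by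
      have hcw : (starRingEnd ℂ w) ≠ 0 := star_ne_zero.mpr hw
      rw [hsign, if_neg hcw, Complex.norm_conj, div_mul_eq_mul_div, Complex.div_ofReal_re]
      rw [← Complex.norm_def, mul_div_mul_left _ _ (two_ne_zero)]
    rw [← hval]
    have h2 := hasDerivAt_iff_tendsto_slope.mp hderiv
    rw [slope_fun_def_field] at h2
    simp only [sub_zero, Complex.ofReal_zero, zero_mul, add_zero] at h2
    refine h2.mono_left (nhdsWithin_mono _ ?_)
    intro t ht
    exact ne_of_gt ht
end

section
/- Let X be a topological space. The map M ↦ I_M := {f ∈ C_b(X) : f vanishes on M} is an inclusion-reversing bijection between the collection of closed subsets of a completely regular Hausdorff space X and the collection of closed ideals of C_b(X) of this form; in particular, for closed subsets M, N ⊆ X one has M ⊆ N if and only if I_N ⊆ I_M, and M = N if and only if I_M = I_N. -/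
open BoundedContinuousFunction

/-- The vanishing ideal of a set `M ⊆ X`. -/
def vanishingIdeal' {X : Type*} [TopologicalSpace X] (M : Set X) : Set (X →ᵇ ℂ) :=
  {f : X →ᵇ ℂ | ∀ x ∈ M, f x = 0}

lemma exists_bcf_vanish {X : Type*} [TopologicalSpace X] [CompletelyRegularSpace X]
    {N : Set X} (hN : IsClosed N) {x : X} (hx : x ∉ N) :
    ∃ F : X →ᵇ ℂ, (∀ y ∈ N, F y = 0) ∧ F x = 1 := by
  obtain ⟨f, hf, hfx, hf1⟩ := CompletelyRegularSpace.completely_regular x N hN hx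
  refine ⟨BoundedContinuousFunction.ofNormedAddCommGroup
      (fun y => ((1 - (f y : ℝ) : ℝ) : ℂ)) ?_ 1 ?_, ?_, ?_⟩
  · exact Complex.continuous_ofReal.comp (continuous_const.sub
      (continuous_induced_dom.comp hf))
  · intro y
    simp only [Complex.norm_real, Real.norm_eq_abs]
    have h0 := (f y).2.1
    have h1 := (f y).2.2
    rw [abs_le]; constructor <;> simp at h0 h1 ⊢ <;> linarith
  · intro y hy
    simp [hf1 hy]
  · simp [hfx]

/-- On a completely regular Hausdorff space the map `M ↦ I_M` is an inclusion-reversing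
bijection on closed subsets: `M ⊆ N ↔ I_N ⊆ I_M` and `M = N ↔ I_M = I_N`. -/
theorem vanishingIdeal_order_reversing_bijection
    {X : Type*} [TopologicalSpace X] [CompletelyRegularSpace X] [T2Space X]
    (M N : Set X) (hM : IsClosed M) (hN : IsClosed N) :
    (M ⊆ N ↔ vanishingIdeal' N ⊆ vanishingIdeal' M) ∧
    (M = N ↔ vanishingIdeal' M = vanishingIdeal' N) := by
  have key : ∀ (A B : Set X), IsClosed B →
      (A ⊆ B ↔ vanishingIdeal' B ⊆ vanishingIdeal' A) := by
    intro A B hB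
    constructor
    · intro hAB f hf x hx
      exact hf x (hAB hx)
    · intro h x hx
      by_contra hxB
      obtain ⟨F, hF0, hF1⟩ := exists_bcf_vanish hB hxB
      have : F x = 0 := h hF0 x hx
      rw [hF1] at this
      exact one_ne_zero this
  refine ⟨key M N hN, ?_⟩
  constructor
  · rintro rfl; rfl
  · intro h
    apply Set.Subset.antisymm
    · exact (key M N hN).mpr h.ge
    · exact (key N M hM).mpr h.le
end

section
/- Let X be a completely regular Hausdorff space, φ = (φ_t)_{t≥0} a semiflow of continuous maps on X, and M ⊆ X a closed subset. Then M is φ-invariant (φ_t(M) ⊆ M for all t ≥ 0) if and only if the ideal I_M = {f ∈ C_b(X) : f|_M = 0} is invariant under every Koopman operator T_φ(t) f = f ∘ φ_t, i.e., T_φ(t) I_M ⊆ I_M for all t ≥ 0. -/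
open BoundedContinuousFunction

/-- For a semiflow `φ` on a completely regular Hausdorff space and a closed `M ⊆ X`,
the set `M` is `φ`-invariant iff the vanishing ideal `I_M` is invariant under all
Koopman operators `T_φ(t) f = f ∘ φ_t`. -/
theorem invariant_iff_ideal_invariant
    {X : Type*} [TopologicalSpace X] [CompletelyRegularSpace X] [T2Space X]
    (φ : ℝ → C(X, X))
    (hφ0 : φ 0 = ContinuousMap.id X)
    (hφadd : ∀ s t : ℝ, 0 ≤ s → 0 ≤ t → (φ s).comp (φ t) = φ (s + t))
    (M : Set X) (hM : IsClosed M) :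
    (∀ t : ℝ, 0 ≤ t → (φ t) '' M ⊆ M) ↔
    (∀ t : ℝ, 0 ≤ t → ∀ f : X →ᵇ ℂ, (∀ x ∈ M, f x = 0) →
      ∀ x ∈ M, (f.compContinuous (φ t)) x = 0) := by
  constructor
  · intro hinv t ht f hf x hx
    exact hf _ (hinv t ht ⟨x, hx, rfl⟩)
  · intro h t ht
    rintro _ ⟨x, hx, rfl⟩
    by_contra hmem
    obtain ⟨g, hgc, hg0, hg1⟩ :=
      CompletelyRegularSpace.completely_regular (φ t x) M hM hmem
    -- f := 1 - g, as a bounded continuous ℂ-valued function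
    set fr : X → ℂ := fun y => (1 : ℂ) - ((g y : ℝ) : ℂ) with hfr
    have hcont : Continuous fr := by
      continuity
    have hbdd : ∀ y : X, ‖fr y‖ ≤ 2 := by
      intro y
      have h0 : (0:ℝ) ≤ (g y : ℝ) := (g y).2.1
      have h1 : (g y : ℝ) ≤ 1 := (g y).2.2
      calc ‖fr y‖ ≤ ‖(1:ℂ)‖ + ‖((g y : ℝ) : ℂ)‖ := norm_sub_le _ _
        _ ≤ 1 + 1 := by
            simp [Complex.norm_real, abs_of_nonneg h0, h1]
        _ = 2 := by norm_num
    let f : X →ᵇ ℂ := ⟨⟨fr, hcont⟩, 4, fun y z => by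
      calc dist (fr y) (fr z) ≤ ‖fr y‖ + ‖fr z‖ := dist_le_norm_add_norm _ _
        _ ≤ 2 + 2 := add_le_add (hbdd y) (hbdd z)
        _ ≤ 4 := by norm_num⟩
    have hfM : ∀ y ∈ M, f y = 0 := by
      intro y hy
      have : g y = 1 := hg1 hy
      show (1:ℂ) - ((g y : ℝ) : ℂ) = 0
      rw [this]
      norm_num
    have := h t ht f hfM x hx
    simp only [compContinuous_apply] at this
    have : fr (φ t x) = 0 := this
    rw [hfr] at this
    simp only [hg0] at this
    norm_num at this
end

section
/- Let X be a completely regular Hausdorff space, φ a jointly continuous semiflow on X, M ⊆ X a compact φ-invariant set, and 𝓑 a family of subsets of X. Then M is 𝓑-attractive (for every B ∈ 𝓑 and every open neighborhood U of M there is t₀ ≥ 0 with φ_t(B) ⊆ U for all t ≥ t₀) if and only if for every f ∈ C_b(X) vanishing on M and every B ∈ 𝓑, sup_{x ∈ B} |f(φ_t(x))| → 0 as t → ∞. -/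
open BoundedContinuousFunction Filter

lemma sep_compact_open {X : Type*} [TopologicalSpace X] [CompletelyRegularSpace X]
    {M U : Set X} (hMcp : IsCompact M) (hU : IsOpen U) (hMU : M ⊆ U) :
    ∃ h : X → ℝ, Continuous h ∧ (∀ y, h y ∈ Set.Icc (0:ℝ) 1) ∧
      (∀ x ∈ M, h x = 0) ∧ (∀ x ∈ Uᶜ, h x = 1) := by
  rcases M.eq_empty_or_nonempty with hMe | hMne
  · exact ⟨fun _ => 1, continuous_const, fun y => by norm_num,
      fun x hx => by simp [hMe] at hx, fun _ _ => rfl⟩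
  have key : ∀ x : X, ∃ g : X → ℝ, Continuous g ∧ (∀ y, g y ∈ Set.Icc (0:ℝ) 1) ∧
      (∀ z ∈ Uᶜ, g z = 1) ∧ (x ∈ M → g x = 0) := by
    intro x
    by_cases hx : x ∈ M
    · obtain ⟨f, cf, hf0, hf1⟩ := CompletelyRegularSpace.completely_regular x Uᶜ
        hU.isClosed_compl (by simp [hMU hx])
      refine ⟨fun y => (f y : ℝ), continuous_subtype_val.comp cf, fun y => (f y).2,
        fun z hz => by simpa using congrArg Subtype.val (hf1 hz),
        fun _ => by simpa using congrArg Subtype.val hf0⟩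
    · exact ⟨fun _ => 1, continuous_const, fun y => by norm_num,
        fun _ _ => rfl, fun h => absurd h hx⟩
  choose g hgc hg01 hg1 hg0 using key
  obtain ⟨s, hsM, hscov⟩ := hMcp.elim_nhds_subcover (fun x => {y | g x y < 1/2})
    (fun x hx => (isOpen_lt (hgc x) continuous_const).mem_nhds (by simp [hg0 x hx]))
  have hs : s.Nonempty := by
    obtain ⟨x0, hx0⟩ := hMne
    obtain ⟨i, hi, -⟩ := Set.mem_iUnion₂.1 (hscov hx0)
    exact ⟨i, hi⟩
  set F : X → ℝ := fun y => s.inf' hs (fun x => g x y) with hF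
  have hFc : Continuous F := by
    apply continuous_iff_continuousAt.2
    intro y
    exact ContinuousAt.finset_inf'_apply hs (fun i _ => (hgc i).continuousAt)
  refine ⟨fun y => max (2 * F y - 1) 0, (by fun_prop), ?_, ?_, ?_⟩
  · intro y
    have h1 : F y ≤ 1 := by
      obtain ⟨i, hi⟩ := hs
      exact le_trans (Finset.inf'_le _ hi) (hg01 i y).2
    constructor
    · exact le_max_right _ _
    · have : 2 * F y - 1 ≤ 1 := by linarith
      exact max_le this (by norm_num)
  · intro x hx
    obtain ⟨i, hi, hxi⟩ := Set.mem_iUnion₂.1 (hscov hx)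
    have : F x ≤ g i x := Finset.inf'_le _ hi
    have hlt : g i x < 1/2 := hxi
    have : 2 * F x - 1 ≤ 0 := by linarith
    exact max_eq_right this
  · intro x hx
    have hF1 : F x = 1 := by
      apply le_antisymm
      · obtain ⟨i, hi⟩ := hs
        exact le_trans (Finset.inf'_le _ hi) (le_of_eq (hg1 i x hx))
      · exact Finset.le_inf' hs _ (fun i _ => le_of_eq (hg1 i x hx).symm)
    show (2 * F x - 1) ⊔ 0 = 1; rw [hF1]; norm_num

/-- A compact invariant set `M` is `𝓑`-attractive iff for every `f ∈ C_b(X)`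
vanishing on `M` and every `B ∈ 𝓑` one has `sup_{x ∈ B} |f(φ_t(x))| → 0` as `t → ∞`. -/
theorem attractive_iff_koopman_stability
    {X : Type*} [TopologicalSpace X] [CompletelyRegularSpace X] [T2Space X]
    (φ : ℝ → X → X)
    (hφcont : Continuous fun p : ℝ × X => φ p.1 p.2)
    (hφ0 : φ 0 = id)
    (hφadd : ∀ s t : ℝ, 0 ≤ s → 0 ≤ t → φ s ∘ φ t = φ (s + t))
    (M : Set X) (hMcp : IsCompact M)
    (hMinv : ∀ t : ℝ, 0 ≤ t → φ t '' M ⊆ M)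
    (𝓑 : Set (Set X)) :
    (∀ B ∈ 𝓑, ∀ U : Set X, IsOpen U → M ⊆ U →
        ∃ t₀ : ℝ, 0 ≤ t₀ ∧ ∀ t ≥ t₀, φ t '' B ⊆ U) ↔
    (∀ f : X →ᵇ ℂ, (∀ x ∈ M, f x = 0) → ∀ B ∈ 𝓑,
        Tendsto (fun t : ℝ => ⨆ x : B, ‖f (φ t x)‖) atTop (nhds 0)) := by
  constructor
  · intro hattr f hf B hB
    rw [Metric.tendsto_atTop]
    intro ε hε
    obtain ⟨t₀, ht₀, ht⟩ := hattr B hB {y | ‖f y‖ < ε / 2}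
      (isOpen_lt (continuous_norm.comp f.continuous) continuous_const)
      (fun x hx => by simp [hf x hx, half_pos hε])
    refine ⟨t₀, fun t htt => ?_⟩
    have hsup : (⨆ x : B, ‖f (φ t x)‖) ≤ ε / 2 := by
      apply Real.iSup_le
      · intro x
        exact le_of_lt (ht t htt (Set.mem_image_of_mem _ x.2))
      · positivity
    have hnn : (0:ℝ) ≤ ⨆ x : B, ‖f (φ t x)‖ :=
      Real.iSup_nonneg fun x => norm_nonneg _
    rw [Real.dist_eq, sub_zero, abs_of_nonneg hnn]
    linarith
  · intro hkoop B hB U hU hMU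
    obtain ⟨h, hc, h01, hM0, hU1⟩ := sep_compact_open hMcp hU hMU
    set f : X →ᵇ ℂ := BoundedContinuousFunction.mkOfBound
      ⟨fun y => (h y : ℂ), (Complex.continuous_ofReal.comp hc)⟩ 2
      (fun x y => by
        have hx := h01 x; have hy := h01 y
        simp only [ContinuousMap.coe_mk, Complex.dist_eq]
        calc ‖(h x : ℂ) - (h y : ℂ)‖ ≤ ‖(h x : ℂ)‖ + ‖(h y : ℂ)‖ :=
              norm_sub_le _ _
          _ ≤ 2 := by
              rw [Complex.norm_real, Complex.norm_real, Real.norm_eq_abs, Real.norm_eq_abs,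
                abs_of_nonneg hx.1, abs_of_nonneg hy.1]
              linarith [hx.2, hy.2]) with hfdef
    have hfabs : ∀ y, ‖f y‖ = h y := fun y => by
      show ‖(h y : ℂ)‖ = h y
      rw [Complex.norm_real, Real.norm_eq_abs, abs_of_nonneg (h01 y).1]
    have hfM : ∀ x ∈ M, f x = 0 := fun x hx => by
      show ((h x : ℂ)) = 0
      rw [hM0 x hx, Complex.ofReal_zero]
    have := hkoop f hfM B hB
    rw [Metric.tendsto_atTop] at this
    obtain ⟨t₁, ht₁⟩ := this (1/2) (by norm_num)
    refine ⟨max t₁ 0, le_max_right _ _, fun t htt => ?_⟩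
    rintro y ⟨x, hx, rfl⟩
    by_contra hy
    have hbdd : BddAbove (Set.range fun x : B => ‖f (φ t x)‖) := by
      refine ⟨1, ?_⟩
      rintro r ⟨z, rfl⟩
      dsimp only
      rw [hfabs]
      exact (h01 _).2
    have hle : ‖f (φ t x)‖ ≤ ⨆ x : B, ‖f (φ t x)‖ :=
      le_ciSup hbdd (⟨x, hx⟩ : B)
    have hd := ht₁ t (le_trans (le_max_left _ _) htt)
    rw [Real.dist_eq, sub_zero] at hd
    have hsuplt : (⨆ x : B, ‖f (φ t x)‖) < 1/2 :=
      lt_of_le_of_lt (le_abs_self _) hd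
    have : ‖f (φ t x)‖ = 1 := by rw [hfabs]; exact hU1 _ hy
    linarith
end

section
/- Let X be a completely regular Hausdorff space, φ a jointly continuous semiflow on X, and 𝓑 a nonempty family of subsets of X with ⋃𝓑 ≠ ∅ such that for every B ∈ 𝓑 and t ≥ 0 there is C ∈ 𝓑 with φ_t(B) ⊆ C. Suppose A ⊆ X is a nonempty compact 𝓑-absorbing set: for every B ∈ 𝓑 there is t₀ ≥ 0 with φ_t(B) ⊆ A for all t ≥ t₀. Then the set I := {f ∈ C_b(X) : for all B ∈ 𝓑, sup_{x ∈ B} |f(φ_t(x))| → 0 as t → ∞} is a proper closed ideal of C_b(X) (closed in the supremum norm) that is invariant under all Koopman operators T_φ(t). -/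
open BoundedContinuousFunction Filter

/-- Given a jointly continuous semiflow `φ`, a suitable family `𝓑` of subsets and a
nonempty compact `𝓑`-absorbing set `A`, the set `I` of all `f ∈ C_b(X)` with
`sup_{x ∈ B} |f(φ_t(x))| → 0` for every `B ∈ 𝓑` is a proper, norm-closed,
Koopman-invariant ideal of `C_b(X)`. -/
theorem absorbing_gives_proper_closed_invariant_ideal
    {X : Type*} [TopologicalSpace X] [CompletelyRegularSpace X] [T2Space X]
    (φ : ℝ → C(X, X))
    (hφcont : Continuous fun p : ℝ × X => φ p.1 p.2)
    (hφ0 : φ 0 = ContinuousMap.id X)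
    (hφadd : ∀ s t : ℝ, 0 ≤ s → 0 ≤ t → (φ s).comp (φ t) = φ (s + t))
    (𝓑 : Set (Set X)) (h𝓑ne : (⋃₀ 𝓑).Nonempty)
    (h𝓑inv : ∀ B ∈ 𝓑, ∀ t : ℝ, 0 ≤ t → ∃ C ∈ 𝓑, (φ t) '' B ⊆ C)
    (A : Set X) (hAne : A.Nonempty) (hAcp : IsCompact A)
    (hAabs : ∀ B ∈ 𝓑, ∃ t₀ : ℝ, 0 ≤ t₀ ∧ ∀ t ≥ t₀, (φ t) '' B ⊆ A) :
    let I : Set (X →ᵇ ℂ) := {f | ∀ B ∈ 𝓑,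
      Tendsto (fun t : ℝ => ⨆ x : B, ‖f (φ t x)‖) atTop (nhds 0)}
    (∀ f g, f ∈ I → g ∈ I → f + g ∈ I) ∧
    (∀ (c : ℂ) g, g ∈ I → c • g ∈ I) ∧
    (∀ f g, g ∈ I → f * g ∈ I) ∧
    ((1 : X →ᵇ ℂ) ∉ I) ∧
    IsClosed I ∧
    (∀ t : ℝ, 0 ≤ t → ∀ f ∈ I, f.compContinuous (φ t) ∈ I) := by
  intro I
  -- basic facts about the suprema
  have habs : ∀ (f : X →ᵇ ℂ) (y : X), ‖f y‖ ≤ ‖f‖ := by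
    intro f y
    exact f.norm_coe_le_norm y
  have hbdd : ∀ (f : X →ᵇ ℂ) (B : Set X) (t : ℝ),
      BddAbove (Set.range fun x : B => ‖f (φ t x)‖) := by
    intro f B t
    exact ⟨‖f‖, by rintro r ⟨x, rfl⟩; exact habs f _⟩
  have hnonneg : ∀ (f : X →ᵇ ℂ) (B : Set X) (t : ℝ),
      0 ≤ ⨆ x : B, ‖f (φ t x)‖ := by
    intro f B t
    exact Real.iSup_nonneg fun x => norm_nonneg _
  -- squeeze lemma: domination by a multiple of a member of `I` gives membership
  have key : ∀ (f g : X →ᵇ ℂ) (C : ℝ), 0 ≤ C →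
      (∀ y : X, ‖f y‖ ≤ C * ‖g y‖) → g ∈ I → f ∈ I := by
    intro f g C hC hle hg B hB
    have hgB := hg B hB
    have hmul : Tendsto (fun t : ℝ => C * ⨆ x : B, ‖g (φ t x)‖)
        atTop (nhds 0) := by
      simpa using hgB.const_mul C
    refine squeeze_zero (fun t => hnonneg f B t) (fun t => ?_) hmul
    refine Real.iSup_le (fun x => ?_) (mul_nonneg hC (hnonneg g B t))
    exact le_trans (hle _) (mul_le_mul_of_nonneg_left (le_ciSup (hbdd g B t) x) hC)
  refine ⟨?_, ?_, ?_, ?_, ?_, ?_⟩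
  · -- addition
    intro f g hf hg B hB
    have hsum : Tendsto (fun t : ℝ =>
        (⨆ x : B, ‖f (φ t x)‖) + ⨆ x : B, ‖g (φ t x)‖)
        atTop (nhds 0) := by
      simpa using (hf B hB).add (hg B hB)
    refine squeeze_zero (fun t => hnonneg (f + g) B t) (fun t => ?_) hsum
    refine Real.iSup_le (fun x => ?_) (add_nonneg (hnonneg f B t) (hnonneg g B t))
    calc ‖(f + g) (φ t x)‖
        ≤ ‖f (φ t x)‖ + ‖g (φ t x)‖ := by
          simp only [BoundedContinuousFunction.coe_add, Pi.add_apply]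
          exact norm_add_le _ _
      _ ≤ (⨆ x : B, ‖f (φ t x)‖) + ⨆ x : B, ‖g (φ t x)‖ :=
          add_le_add (le_ciSup (hbdd f B t) x) (le_ciSup (hbdd g B t) x)
  · -- scalar multiplication
    intro c g hg
    refine key (c • g) g ‖c‖ (norm_nonneg c) (fun y => ?_) hg
    simp [map_mul]
  · -- multiplication
    intro f g hg
    refine key (f * g) g ‖f‖ (norm_nonneg f) (fun y => ?_) hg
    simp only [BoundedContinuousFunction.coe_mul, Pi.mul_apply, norm_mul]
    exact mul_le_mul_of_nonneg_right (habs f y) (norm_nonneg _)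
  · -- properness
    intro h1
    obtain ⟨x, B, hB, hxB⟩ := h𝓑ne
    have h := h1 B hB
    have hge : ∀ t : ℝ, (1 : ℝ) ≤ ⨆ y : B, ‖(1 : X →ᵇ ℂ) (φ t y)‖ := by
      intro t
      have := le_ciSup (hbdd 1 B t) (⟨x, hxB⟩ : B)
      simpa using this
    have := (h.eventually_lt_const (by norm_num : (0 : ℝ) < 1)).exists
    obtain ⟨t, ht⟩ := this
    exact absurd (hge t) (not_le.mpr ht)
  · -- closedness
    refine isClosed_of_closure_subset fun f hf B hB => ?_
    rw [Metric.tendsto_nhds]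
    intro ε hε
    obtain ⟨g, hgI, hgd⟩ := Metric.mem_closure_iff.mp hf (ε / 2) (by linarith)
    have hg := hgI B hB
    rw [Metric.tendsto_nhds] at hg
    filter_upwards [hg (ε / 2) (by linarith)] with t ht
    rw [Real.dist_eq, sub_zero, abs_of_nonneg (hnonneg g B t)] at ht
    rw [Real.dist_eq, sub_zero, abs_of_nonneg (hnonneg f B t)]
    have hle : (⨆ x : B, ‖f (φ t x)‖)
        ≤ (⨆ x : B, ‖g (φ t x)‖) + dist f g := by
      refine Real.iSup_le (fun x => ?_) (add_nonneg (hnonneg g B t) dist_nonneg)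
      have h1 : ‖f (φ t x)‖ ≤ ‖g (φ t x)‖ + dist f g := by
        have h2 : dist (f (φ t x)) (g (φ t x)) ≤ dist f g :=
          BoundedContinuousFunction.dist_coe_le_dist _
        calc ‖f (φ t x)‖ = dist (f (φ t x)) 0 := by
              simp [Complex.dist_eq]
          _ ≤ dist (f (φ t x)) (g (φ t x)) + dist (g (φ t x)) 0 := dist_triangle _ _ _
          _ ≤ ‖g (φ t x)‖ + dist f g := by
              rw [add_comm]
              refine add_le_add ?_ h2
              simp [Complex.dist_eq]
      exact h1.trans (add_le_add_left (le_ciSup (hbdd g B t) x) _)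
    linarith
  · -- invariance under the Koopman operators
    intro t₀ ht₀ f hf B hB
    have hfB := hf B hB
    have h1 : Tendsto (fun t : ℝ => t₀ + t) atTop atTop :=
      tendsto_atTop_add_const_left _ _ tendsto_id
    have h2 := hfB.comp h1
    refine h2.congr' ?_
    filter_upwards [eventually_ge_atTop (0 : ℝ)] with t ht
    have hadd := hφadd t₀ t ht₀ ht
    refine iSup_congr fun x => ?_
    have : φ (t₀ + t) (x : X) = φ t₀ (φ t (x : X)) := by
      rw [← hadd]; rfl
    simp [Function.comp, this]
end

section
/- Let χ : C_b(X) → ℂ be a unital algebra homomorphism on the algebra of bounded continuous complex-valued functions on a topological space X. Then χ is a unital lattice homomorphism, i.e., χ(|f|) = |χ(f)| for all f ∈ C_b(X). Conversely, every positive unital linear functional χ with χ(|f|) = |χ(f)| for all f is multiplicative. -/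
open BoundedContinuousFunction

/-- The pointwise modulus `|f|` of `f ∈ C_b(X)`, viewed as a (real-valued) element of
`C_b(X)` with complex values. -/
noncomputable def cabs {X : Type*} [TopologicalSpace X] (f : X →ᵇ ℂ) : X →ᵇ ℂ :=
  BoundedContinuousFunction.comp (fun z : ℂ => ((‖z‖ : ℝ) : ℂ))
    (LipschitzWith.of_dist_le_mul (by
      intro a b
      rw [NNReal.coe_one, one_mul, Complex.isometry_ofReal.dist_eq, Real.dist_eq, dist_eq_norm]
      exact abs_norm_sub_norm_le a b)) f

lemma cabs_apply {X : Type*} [TopologicalSpace X] (f : X →ᵇ ℂ) (x : X) :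
    cabs f x = ((‖f x‖ : ℝ) : ℂ) := rfl

/-- Pointwise square root of the modulus of `f`. -/
noncomputable def csqrt {X : Type*} [TopologicalSpace X] (f : X →ᵇ ℂ) : X →ᵇ ℂ :=
  BoundedContinuousFunction.ofNormedAddCommGroup
    (fun x => (Real.sqrt ‖f x‖ : ℂ))
    (Complex.continuous_ofReal.comp (Real.continuous_sqrt.comp
      (continuous_norm.comp f.continuous)))
    (Real.sqrt ‖f‖)
    (fun x => by
      rw [Complex.norm_real, Real.norm_eq_abs, abs_of_nonneg (Real.sqrt_nonneg _)]
      exact Real.sqrt_le_sqrt (by exact f.norm_coe_le_norm x))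

lemma csqrt_apply {X : Type*} [TopologicalSpace X] (f : X →ᵇ ℂ) (x : X) :
    csqrt f x = (Real.sqrt ‖f x‖ : ℂ) := rfl

lemma csqrt_mul_self {X : Type*} [TopologicalSpace X] (f : X →ᵇ ℂ) :
    csqrt f * csqrt f = cabs f := by
  ext x
  rw [BoundedContinuousFunction.mul_apply, csqrt_apply, cabs_apply, ← Complex.ofReal_mul,
    Real.mul_self_sqrt (norm_nonneg _)]

lemma csqrt_isSelfAdjoint {X : Type*} [TopologicalSpace X] (f : X →ᵇ ℂ) :
    IsSelfAdjoint (csqrt f) := by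
  apply BoundedContinuousFunction.ext
  intro x
  rw [BoundedContinuousFunction.star_apply, csqrt_apply, Complex.star_def, Complex.conj_ofReal]

lemma cabs_mul_self {X : Type*} [TopologicalSpace X] (f : X →ᵇ ℂ) :
    cabs f * cabs f = star f * f := by
  ext x
  rw [BoundedContinuousFunction.mul_apply, BoundedContinuousFunction.mul_apply,
    BoundedContinuousFunction.star_apply, cabs_apply, Complex.star_def,
    mul_comm (starRingEnd ℂ (f x)), Complex.mul_conj, Complex.normSq_eq_norm_sq]
  push_cast
  ring

/-- Real part of `f`, as a complex-valued bounded continuous function. -/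
noncomputable def reb {X : Type*} [TopologicalSpace X] (f : X →ᵇ ℂ) : X →ᵇ ℂ :=
  BoundedContinuousFunction.ofNormedAddCommGroup
    (fun x => ((f x).re : ℂ))
    (Complex.continuous_ofReal.comp (Complex.continuous_re.comp f.continuous))
    ‖f‖
    (fun x => by
      rw [Complex.norm_real]
      exact le_trans (Complex.abs_re_le_norm _) (by
        exact f.norm_coe_le_norm x))

/-- Imaginary part of `f`, as a complex-valued bounded continuous function. -/
noncomputable def imb {X : Type*} [TopologicalSpace X] (f : X →ᵇ ℂ) : X →ᵇ ℂ :=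
  BoundedContinuousFunction.ofNormedAddCommGroup
    (fun x => ((f x).im : ℂ))
    (Complex.continuous_ofReal.comp (Complex.continuous_im.comp f.continuous))
    ‖f‖
    (fun x => by
      rw [Complex.norm_real]
      exact le_trans (Complex.abs_im_le_norm _) (by
        exact f.norm_coe_le_norm x))

lemma reb_apply {X : Type*} [TopologicalSpace X] (f : X →ᵇ ℂ) (x : X) :
    reb f x = ((f x).re : ℂ) := rfl

lemma imb_apply {X : Type*} [TopologicalSpace X] (f : X →ᵇ ℂ) (x : X) :
    imb f x = ((f x).im : ℂ) := rfl

lemma reb_add_I_smul_imb {X : Type*} [TopologicalSpace X] (f : X →ᵇ ℂ) :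
    reb f + Complex.I • imb f = f := by
  ext x
  rw [BoundedContinuousFunction.add_apply, BoundedContinuousFunction.smul_apply,
    reb_apply, imb_apply, smul_eq_mul, mul_comm, Complex.re_add_im]

/-- A unital algebra homomorphism `χ : C_b(X) → ℂ` is a lattice homomorphism
(`χ(|f|) = |χ(f)|`); conversely, a positive unital linear functional satisfying
`χ(|f|) = |χ(f)|` for all `f` is multiplicative. -/
theorem character_lattice_hom_iff_multiplicative
    {X : Type*} [TopologicalSpace X]
    (χ : (X →ᵇ ℂ) →ₗ[ℂ] ℂ) (hone : χ 1 = 1) :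
    ((∀ f g : X →ᵇ ℂ, χ (f * g) = χ f * χ g) →
      ∀ f : X →ᵇ ℂ, χ (cabs f) = ((‖χ f‖ : ℝ) : ℂ)) ∧
    (((∀ f : X →ᵇ ℂ, (∀ x, 0 ≤ (f x).re ∧ (f x).im = 0) →
          0 ≤ (χ f).re ∧ (χ f).im = 0) ∧
        (∀ f : X →ᵇ ℂ, χ (cabs f) = ((‖χ f‖ : ℝ) : ℂ))) →
      ∀ f g : X →ᵇ ℂ, χ (f * g) = χ f * χ g) := by
  constructor
  · -- Forward direction: character ⇒ lattice homomorphism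
    intro hmul f
    set φ : (X →ᵇ ℂ) →ₐ[ℂ] ℂ := AlgHom.ofLinearMap χ hone hmul with hφ
    have hφa : ∀ a : X →ᵇ ℂ, φ a = χ a := fun a => rfl
    have hsa : ∀ a : X →ᵇ ℂ, IsSelfAdjoint a → (χ a).im = 0 := by
      intro a ha
      have hspec : χ a ∈ spectrum ℂ a := by
        rw [← hφa]; exact AlgHom.apply_mem_spectrum φ a
      have h := ha.mem_spectrum_eq_re hspec
      rw [h, Complex.ofReal_im]
    -- χ (star f) = conj (χ f)
    have sa1 : IsSelfAdjoint (f + star f) := by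
      rw [IsSelfAdjoint, star_add, star_star, add_comm]
    have sa2 : IsSelfAdjoint (Complex.I • (f - star f)) := by
      rw [IsSelfAdjoint, star_smul, star_sub, star_star, Complex.star_def, Complex.conj_I,
        neg_smul, smul_sub, smul_sub, neg_sub]
    have h1 : (χ f).im + (χ (star f)).im = 0 := by
      have := hsa _ sa1
      rwa [map_add, Complex.add_im] at this
    have h2 : (χ f).re - (χ (star f)).re = 0 := by
      have := hsa _ sa2
      rw [map_smul, map_sub, smul_eq_mul, Complex.mul_im, Complex.I_re, Complex.I_im,
        zero_mul, one_mul, zero_add, Complex.sub_re] at this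
      exact this
    have hstar : χ (star f) = (starRingEnd ℂ) (χ f) := by
      apply Complex.ext
      · rw [Complex.conj_re]; linarith
      · rw [Complex.conj_im]; linarith
    -- χ (csqrt f) is real
    have hb : (χ (csqrt f)).im = 0 := hsa _ (csqrt_isSelfAdjoint f)
    have hbr : χ (csqrt f) = (((χ (csqrt f)).re : ℝ) : ℂ) := by
      apply Complex.ext
      · rw [Complex.ofReal_re]
      · rw [Complex.ofReal_im, hb]
    set r : ℝ := (χ (csqrt f)).re with hr
    have habs : χ (cabs f) = ((r * r : ℝ) : ℂ) := by
      rw [← csqrt_mul_self, hmul, hbr, ← Complex.ofReal_mul]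
    have hsq : χ (cabs f) * χ (cabs f) = ((‖χ f‖ ^ 2 : ℝ) : ℂ) := by
      rw [← hmul, cabs_mul_self, hmul, hstar, mul_comm, Complex.mul_conj,
        Complex.normSq_eq_norm_sq]
    rw [habs] at hsq
    rw [← Complex.ofReal_mul] at hsq
    have hreal : (r * r) * (r * r) = ‖χ f‖ ^ 2 := by exact_mod_cast hsq
    have : r * r = ‖χ f‖ := by
      nlinarith [mul_self_nonneg r, norm_nonneg (χ f), sq_nonneg (r * r - ‖χ f‖)]
    rw [habs, this]
  · -- Converse direction
    rintro ⟨hpos, hlat⟩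
    -- real-valued functions have real χ-values
    have hreal : ∀ f : X →ᵇ ℂ, (∀ x, (f x).im = 0) → (χ f).im = 0 := by
      intro f hf
      have h := hpos (f + (‖f‖ : ℂ) • 1) (fun x => by
        constructor
        · rw [BoundedContinuousFunction.add_apply, BoundedContinuousFunction.smul_apply,
            BoundedContinuousFunction.coe_one, Pi.one_apply, smul_eq_mul, mul_one,
            Complex.add_re, Complex.ofReal_re]
          have h1 : |(f x).re| ≤ ‖f x‖ := Complex.abs_re_le_norm _
          have h2 : ‖f x‖ ≤ ‖f‖ := by
            exact f.norm_coe_le_norm x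
          have := neg_abs_le (f x).re
          linarith
        · rw [BoundedContinuousFunction.add_apply, BoundedContinuousFunction.smul_apply,
            BoundedContinuousFunction.coe_one, Pi.one_apply, smul_eq_mul, mul_one,
            Complex.add_im, Complex.ofReal_im, hf x, add_zero])
      have := h.2
      rwa [map_add, map_smul, hone, smul_eq_mul, mul_one, Complex.add_im, Complex.ofReal_im,
        add_zero] at this
    -- key: if h is real-valued and χ h = 0 then χ (h * h) = 0
    have key : ∀ h : X →ᵇ ℂ, (∀ x, (h x).im = 0) → χ h = 0 → χ (h * h) = 0 := by
      intro h hh h0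
      have habs : χ (cabs h) = 0 := by rw [hlat, h0]; simp
      have hx : ∀ x, h x = (((h x).re : ℝ) : ℂ) := by
        intro x
        apply Complex.ext
        · rw [Complex.ofReal_re]
        · rw [Complex.ofReal_im, hh x]
      have h1 := hpos (h * h) (fun x => by
        rw [BoundedContinuousFunction.mul_apply]
        constructor
        · rw [Complex.mul_re, hh x]
          nlinarith [mul_self_nonneg (h x).re]
        · rw [Complex.mul_im, hh x]; ring)
      have h2 := hpos ((‖h‖ : ℂ) • cabs h - h * h) (fun x => by
        rw [BoundedContinuousFunction.sub_apply, BoundedContinuousFunction.smul_apply,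
          BoundedContinuousFunction.mul_apply, cabs_apply, smul_eq_mul]
        have hb : |(h x).re| ≤ ‖h‖ := by
          rw [hx x] at *
          calc |(h x).re| = ‖(((h x).re : ℝ) : ℂ)‖ := ((Complex.norm_real _).trans (Real.norm_eq_abs _)).symm
            _ = ‖h x‖ := by rw [← hx x]
            _ ≤ ‖h‖ := h.norm_coe_le_norm x
        have habsx : ‖h x‖ = |(h x).re| := by
          conv_lhs => rw [hx x]
          exact (Complex.norm_real _).trans (Real.norm_eq_abs _)
        constructor
        · rw [Complex.sub_re, Complex.mul_re, Complex.mul_re, hh x, Complex.ofReal_re,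
            Complex.ofReal_im, Complex.ofReal_re, habsx]
          nlinarith [abs_nonneg (h x).re, abs_mul_abs_self (h x).re]
        · rw [Complex.sub_im, Complex.mul_im, Complex.mul_im, hh x, Complex.ofReal_re,
            Complex.ofReal_im, Complex.ofReal_im, habsx]
          ring)
      have hval : χ ((‖h‖ : ℂ) • cabs h - h * h) = -χ (h * h) := by
        rw [map_sub, map_smul, habs, smul_zero, zero_sub]
      rw [hval] at h2
      apply Complex.ext
      · rw [Complex.zero_re]
        have := h2.1
        rw [Complex.neg_re] at this
        linarith [h1.1]
      · rw [Complex.zero_im]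
        exact h1.2
    -- squares of real-valued functions
    have hsq : ∀ f : X →ᵇ ℂ, (∀ x, (f x).im = 0) → χ (f * f) = χ f * χ f := by
      intro f hf
      set a : ℂ := χ f with ha
      have haim : a.im = 0 := hreal f hf
      set c : X →ᵇ ℂ := algebraMap ℂ (X →ᵇ ℂ) a with hc
      have hcs : c = a • 1 := by rw [hc, Algebra.algebraMap_eq_smul_one]
      set h : X →ᵇ ℂ := f - c with hh
      have hhim : ∀ x, (h x).im = 0 := by
        intro x
        rw [hh, BoundedContinuousFunction.sub_apply, hcs,
          BoundedContinuousFunction.smul_apply, BoundedContinuousFunction.coe_one,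
          Pi.one_apply, smul_eq_mul, mul_one, Complex.sub_im, hf x, haim, sub_zero]
      have hχc : χ c = a := by rw [hcs, map_smul, hone, smul_eq_mul, mul_one]
      have hχh : χ h = 0 := by rw [hh, map_sub, hχc, ← ha, sub_self]
      have hzero : χ (h * h) = 0 := key h hhim hχh
      have e : f * f = h * h + c * f + c * f - c * c := by rw [hh]; ring
      have hcf : χ (c * f) = a * a := by
        rw [hcs, smul_mul_assoc, one_mul, map_smul, smul_eq_mul, ← ha]
      have hcc : χ (c * c) = a * a := by
        rw [hcs, smul_mul_assoc, one_mul, map_smul, map_smul, hone, smul_eq_mul,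
          smul_eq_mul, mul_one]
      rw [e, map_sub, map_add, map_add, hzero, hcf, hcc]
      ring
    -- products of real-valued functions
    have hmul_rr : ∀ p q : X →ᵇ ℂ, (∀ x, (p x).im = 0) → (∀ x, (q x).im = 0) →
        χ (p * q) = χ p * χ q := by
      intro p q hp hq
      have hpq : ∀ x, ((p + q) x).im = 0 := fun x => by
        rw [BoundedContinuousFunction.add_apply, Complex.add_im, hp x, hq x, add_zero]
      have h1 : χ ((p + q) * (p + q)) = χ (p + q) * χ (p + q) := hsq (p + q) hpq
      have h2 := hsq p hp
      have h3 := hsq q hq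
      have e : (p + q) * (p + q) = p * p + q * q + (p * q + p * q) := by ring
      rw [e, map_add, map_add, map_add, h2, h3, map_add] at h1
      linear_combination h1 / 2
    -- real times arbitrary
    have hmul_rg : ∀ p g : X →ᵇ ℂ, (∀ x, (p x).im = 0) → χ (p * g) = χ p * χ g := by
      intro p g hp
      have hre : ∀ x, ((reb g) x).im = 0 := fun x => by
        rw [reb_apply, Complex.ofReal_im]
      have him : ∀ x, ((imb g) x).im = 0 := fun x => by
        rw [imb_apply, Complex.ofReal_im]
      conv_lhs => rw [← reb_add_I_smul_imb g]
      rw [mul_add, mul_smul_comm, map_add, map_smul, hmul_rr p (reb g) hp hre,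
        hmul_rr p (imb g) hp him, smul_eq_mul]
      conv_rhs => rw [← reb_add_I_smul_imb g]
      rw [map_add, map_smul, smul_eq_mul]
      ring
    -- general case
    intro f g
    have hre : ∀ x, ((reb f) x).im = 0 := fun x => by
      rw [reb_apply, Complex.ofReal_im]
    have him : ∀ x, ((imb f) x).im = 0 := fun x => by
      rw [imb_apply, Complex.ofReal_im]
    conv_lhs => rw [← reb_add_I_smul_imb f]
    rw [add_mul, smul_mul_assoc, map_add, map_smul, hmul_rg (reb f) g hre,
      hmul_rg (imb f) g him, smul_eq_mul]
    conv_rhs => rw [← reb_add_I_smul_imb f]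
    rw [map_add, map_smul, smul_eq_mul]
    ring
end

section
/- Let E be a topological vector space, I ⊆ ℝ a compact interval containing t₀, H : I → L(E) strongly continuous and such that {H(t) : t ∈ I} is equicontinuous, and h : I → E continuous. If h is differentiable at t₀ and t ↦ H(t) h(t₀) is differentiable at t₀, then t ↦ H(t) h(t) is continuous on I and differentiable at t₀ with derivative H(t₀) h'(t₀) + (d/dt)|_{t=t₀} [H(t) h(t₀)]. -/
open Filter

private theorem aux_equi {E : Type*} [AddCommGroup E] [Module ℝ E] [TopologicalSpace E]
    (a b : ℝ) (H : ℝ → E →L[ℝ] E)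
    (hequi : ∀ U ∈ nhds (0 : E), ∃ V ∈ nhds (0 : E),
      ∀ t ∈ Set.Icc a b, ∀ x ∈ V, H t x ∈ U)
    {l : Filter ℝ} {g : ℝ → E}
    (hmem : ∀ᶠ t in l, t ∈ Set.Icc a b)
    (hg : Tendsto g l (nhds 0)) :
    Tendsto (fun t => H t (g t)) l (nhds 0) := by
  rw [tendsto_def]
  intro U hU
  obtain ⟨V, hV, hHV⟩ := hequi U hU
  filter_upwards [hmem, hg hV] with t ht hgt using hHV t ht _ hgt

/-- Product rule lemma: if `H : I → L(E)` is strongly continuous and equicontinuous on a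
compact interval `I`, `h : I → E` is continuous, `h` is differentiable at `t₀` and
`t ↦ H(t) h(t₀)` is differentiable at `t₀`, then `t ↦ H(t) h(t)` is continuous on `I`
and differentiable at `t₀` with derivative `H(t₀) h'(t₀) + (d/dt)|_{t₀} H(t) h(t₀)`. -/
theorem product_rule_equicontinuous
    {E : Type*} [AddCommGroup E] [Module ℝ E] [TopologicalSpace E]
    [IsTopologicalAddGroup E] [ContinuousSMul ℝ E]
    (a b t₀ : ℝ) (hab : a ≤ b) (ht₀ : t₀ ∈ Set.Icc a b)
    (H : ℝ → E →L[ℝ] E) (h : ℝ → E) (v w : E)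
    (hstrong : ∀ x : E, ContinuousOn (fun t => H t x) (Set.Icc a b))
    (hequi : ∀ U ∈ nhds (0 : E), ∃ V ∈ nhds (0 : E),
      ∀ t ∈ Set.Icc a b, ∀ x ∈ V, H t x ∈ U)
    (hh : ContinuousOn h (Set.Icc a b))
    (hdiff : Tendsto (fun t : ℝ => (t - t₀)⁻¹ • (h t - h t₀))
      (nhdsWithin t₀ (Set.Icc a b \ {t₀})) (nhds v))
    (hHdiff : Tendsto (fun t : ℝ => (t - t₀)⁻¹ • (H t (h t₀) - H t₀ (h t₀)))
      (nhdsWithin t₀ (Set.Icc a b \ {t₀})) (nhds w)) :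
    ContinuousOn (fun t => H t (h t)) (Set.Icc a b) ∧
    Tendsto (fun t : ℝ => (t - t₀)⁻¹ • (H t (h t) - H t₀ (h t₀)))
      (nhdsWithin t₀ (Set.Icc a b \ {t₀})) (nhds (H t₀ v + w)) := by
  constructor
  · intro s hs
    have hmem : ∀ᶠ t in nhdsWithin s (Set.Icc a b), t ∈ Set.Icc a b :=
      eventually_mem_nhdsWithin
    have h1 : Tendsto (fun t => H t (h t - h s)) (nhdsWithin s (Set.Icc a b)) (nhds 0) :=
      aux_equi a b H hequi hmem (by simpa using Filter.Tendsto.sub (hh s hs : Tendsto h _ (nhds (h s))) (tendsto_const_nhds (x := h s)))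
    have h2 : Tendsto (fun t => H t (h s)) (nhdsWithin s (Set.Icc a b)) (nhds (H s (h s))) :=
      hstrong (h s) s hs
    have h3 := h1.add h2
    rw [zero_add] at h3
    refine h3.congr fun t => ?_
    simp [map_sub]
  · have hmem : ∀ᶠ t in nhdsWithin t₀ (Set.Icc a b \ {t₀}), t ∈ Set.Icc a b :=
      eventually_mem_nhdsWithin.mono fun t ht => ht.1
    have hq0 : Tendsto (fun t => (t - t₀)⁻¹ • (h t - h t₀) - v)
        (nhdsWithin t₀ (Set.Icc a b \ {t₀})) (nhds 0) := by
      simpa using hdiff.sub (tendsto_const_nhds (x := v))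
    have h1 : Tendsto (fun t => H t ((t - t₀)⁻¹ • (h t - h t₀) - v))
        (nhdsWithin t₀ (Set.Icc a b \ {t₀})) (nhds 0) :=
      aux_equi a b H hequi hmem hq0
    have h2 : Tendsto (fun t => H t v) (nhdsWithin t₀ (Set.Icc a b \ {t₀})) (nhds (H t₀ v)) :=
      (hstrong v t₀ ht₀).mono_left (nhdsWithin_mono _ Set.diff_subset)
    have h3 := (h1.add h2).add hHdiff
    rw [zero_add] at h3
    refine h3.congr fun t => ?_
    simp only [map_sub, map_smul, smul_sub]
    abel
end
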